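/- Let X and U be finite nonempty sets, K a positive integer, and L_P, L_Q ≥ 0. Let π = (π_k)_{k∈[K]} be decision rules π_k : X × P(X) → P(U) with |π_k(x,m₁) − π_k(x,m₂)|₁ ≤ L_Q·|m₁ − m₂|₁ for all arguments. Let P_k : X × U × P(X) × P(U) → P(X) satisfy |P_k(x,u,m₁,n₁) − P_k(x,u,m₂,n₂)|₁ ≤ L_P·(|m₁ − m₂|₁ + |n₁ − n₂|₁). For μ ∈ P(X×[K]) with marginal μ[X], define ν^MF(μ,π)(u,k) = Σ_x π_k(x,μ[X])(u)·μ(x,k) with U-marginal ν^MF(μ,π)[U], and P^MF(μ,π) ∈ P(X×[K]) by P^MF(μ,π)(x',k) = Σ_{x,u} μ(x,k)·π_k(x,μ[X])(u)·P_k(x,u,μ[X],ν^MF(μ,π)[U])(x'). Then for all μ, μ' ∈ P(X×[K]): |P^MF(μ,π)[X] − P^MF(μ',π)[X]|₁ ≤ |P^MF(μ,π) − P^MF(μ',π)|₁ ≤ S_P'·|μ − μ'|₁ + S_P''·|μ[X] − μ'[X]|₁, where S_P' = 1 + L_P and S_P'' = L_Q + L_P·(1+L_Q). -/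

import Mathlib

open Finset

/-- A probability distribution on a finite type, represented as a nonnegative
function summing to one. -/
def IsProb {A : Type*} [Fintype A] (μ : A → ℝ) : Prop :=
  (∀ a, 0 ≤ μ a) ∧ ∑ a, μ a = 1

/-- The L1 distance between two real-valued functions on a finite type. -/
noncomputable def l1 {A : Type*} [Fintype A] (μ ν : A → ℝ) : ℝ :=
  ∑ a, |μ a - ν a|

/-- The marginal on `A` of a distribution on `A × Fin K`. -/
def marg {A : Type*} [Fintype A] {K : ℕ} (μ : A × Fin K → ℝ) : A → ℝ :=
  fun a => ∑ k, μ (a, k)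

lemma marg_isProb {A : Type*} [Fintype A] {K : ℕ} {μ : A × Fin K → ℝ} (h : IsProb μ) :
    IsProb (marg μ) := by
  constructor
  · intro a; exact Finset.sum_nonneg fun k _ => h.1 _
  · rw [← h.2, Fintype.sum_prod_type]; rfl

lemma sum_prob_swap {A : Type*} [Fintype A] {K : ℕ} {μ : A × Fin K → ℝ} (h : IsProb μ) :
    ∑ k : Fin K, ∑ a : A, μ (a, k) = 1 := by
  rw [Finset.sum_comm, ← Fintype.sum_prod_type]; exact h.2

lemma l1_marg_le {A : Type*} [Fintype A] {K : ℕ} (μ ν : A × Fin K → ℝ) :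
    l1 (marg μ) (marg ν) ≤ l1 μ ν := by
  unfold l1 marg
  rw [Fintype.sum_prod_type]
  refine Finset.sum_le_sum fun a _ => ?_
  rw [← Finset.sum_sub_distrib]
  exact Finset.abs_sum_le_sum_abs _ _

lemma sum_rot {α β γ δ : Type*} [Fintype α] [Fintype β] [Fintype γ] [Fintype δ]
    (f : α → β → γ → δ → ℝ) :
    ∑ a, ∑ b, ∑ c, ∑ d, f a b c d = ∑ b, ∑ c, ∑ d, ∑ a, f a b c d := by
  rw [Finset.sum_comm]
  refine Finset.sum_congr rfl fun b _ => ?_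
  rw [Finset.sum_comm]
  exact Finset.sum_congr rfl fun c _ => Finset.sum_comm

theorem stmt17
    {X U : Type*} [Fintype X] [Fintype U] [Nonempty X] [Nonempty U]
    (K : ℕ) (hK : 0 < K)
    (LP LQ : ℝ) (hLP : 0 ≤ LP) (hLQ : 0 ≤ LQ)
    (pi : Fin K → X → (X → ℝ) → U → ℝ)
    (hpiProb : ∀ k x m, IsProb m → IsProb (pi k x m))
    (hpiLip : ∀ k x m₁ m₂, IsProb m₁ → IsProb m₂ →
      l1 (pi k x m₁) (pi k x m₂) ≤ LQ * l1 m₁ m₂)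
    (Pk : Fin K → X → U → (X → ℝ) → (U → ℝ) → X → ℝ)
    (hPkProb : ∀ k x u m n, IsProb m → IsProb n → IsProb (Pk k x u m n))
    (hPkLip : ∀ k x u m₁ n₁ m₂ n₂, IsProb m₁ → IsProb n₁ → IsProb m₂ → IsProb n₂ →
      l1 (Pk k x u m₁ n₁) (Pk k x u m₂ n₂) ≤ LP * (l1 m₁ m₂ + l1 n₁ n₂))
    (nuMF : (X × Fin K → ℝ) → U × Fin K → ℝ)
    (hnuMF : ∀ μ u k, nuMF μ (u, k) = ∑ x, pi k x (marg μ) u * μ (x, k))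
    (PMFmu : (X × Fin K → ℝ) → X × Fin K → ℝ)
    (hPMFmu : ∀ μ x' k, PMFmu μ (x', k) =
      ∑ x, ∑ u, μ (x, k) * pi k x (marg μ) u *
        Pk k x u (marg μ) (marg (nuMF μ)) x')
    (μ μ' : X × Fin K → ℝ) (hμ : IsProb μ) (hμ' : IsProb μ') :
    l1 (marg (PMFmu μ)) (marg (PMFmu μ')) ≤ l1 (PMFmu μ) (PMFmu μ') ∧
      l1 (PMFmu μ) (PMFmu μ')
        ≤ (1 + LP) * l1 μ μ' + (LQ + LP * (1 + LQ)) * l1 (marg μ) (marg μ') := by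
  classical
  have hm : IsProb (marg μ) := marg_isProb hμ
  have hm' : IsProb (marg μ') := marg_isProb hμ'
  -- nuMF of a probability is a probability
  have hnuP : ∀ (σ : X × Fin K → ℝ), IsProb σ → IsProb (nuMF σ) := by
    intro σ hσ
    have hms := marg_isProb hσ
    refine ⟨?_, ?_⟩
    · rintro ⟨u, k⟩
      rw [hnuMF]
      exact Finset.sum_nonneg fun x _ => mul_nonneg ((hpiProb k x _ hms).1 u) (hσ.1 _)
    · rw [Fintype.sum_prod_type]
      simp only [hnuMF]
      rw [Finset.sum_comm]
      have hk : ∀ k : Fin K, ∑ u, ∑ x, pi k x (marg σ) u * σ (x, k) = ∑ x, σ (x, k) := by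
        intro k
        rw [Finset.sum_comm]
        refine Finset.sum_congr rfl fun x _ => ?_
        rw [← Finset.sum_mul, (hpiProb k x _ hms).2, one_mul]
      rw [Finset.sum_congr rfl fun k _ => hk k]
      exact sum_prob_swap hσ
  have hν : IsProb (marg (nuMF μ)) := marg_isProb (hnuP μ hμ)
  have hν' : IsProb (marg (nuMF μ')) := marg_isProb (hnuP μ' hμ')
  -- Lipschitz bound for the mean-field action distribution
  have hl1ν : l1 (marg (nuMF μ)) (marg (nuMF μ'))
      ≤ l1 μ μ' + LQ * l1 (marg μ) (marg μ') := by
    have step1 : l1 (marg (nuMF μ)) (marg (nuMF μ'))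
        ≤ ∑ u : U, ∑ k, ∑ x,
            (pi k x (marg μ) u * |μ (x, k) - μ' (x, k)|
              + |pi k x (marg μ) u - pi k x (marg μ') u| * μ' (x, k)) := by
      unfold l1 marg
      refine Finset.sum_le_sum fun u _ => ?_
      rw [← Finset.sum_sub_distrib]
      refine (Finset.abs_sum_le_sum_abs _ _).trans (Finset.sum_le_sum fun k _ => ?_)
      rw [hnuMF, hnuMF, ← Finset.sum_sub_distrib]
      refine (Finset.abs_sum_le_sum_abs _ _).trans (Finset.sum_le_sum fun x _ => ?_)
      have hsplit : pi k x (marg μ) u * μ (x, k) - pi k x (marg μ') u * μ' (x, k)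
          = pi k x (marg μ) u * (μ (x, k) - μ' (x, k))
            + (pi k x (marg μ) u - pi k x (marg μ') u) * μ' (x, k) := by ring
      rw [hsplit]
      refine (abs_add_le _ _).trans_eq ?_
      rw [abs_mul, abs_mul, abs_of_nonneg ((hpiProb k x _ hm).1 u),
        abs_of_nonneg (hμ'.1 _)]
      rfl
    refine step1.trans ?_
    have swap : ∑ u : U, ∑ k, ∑ x,
        (pi k x (marg μ) u * |μ (x, k) - μ' (x, k)|
          + |pi k x (marg μ) u - pi k x (marg μ') u| * μ' (x, k))
        = ∑ k, ∑ x, ∑ u : U,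
        (pi k x (marg μ) u * |μ (x, k) - μ' (x, k)|
          + |pi k x (marg μ) u - pi k x (marg μ') u| * μ' (x, k)) := by
      rw [Finset.sum_comm]
      exact Finset.sum_congr rfl fun k _ => Finset.sum_comm
    rw [swap]
    have peru : ∀ (k : Fin K) (x : X), ∑ u : U,
        (pi k x (marg μ) u * |μ (x, k) - μ' (x, k)|
          + |pi k x (marg μ) u - pi k x (marg μ') u| * μ' (x, k))
        = |μ (x, k) - μ' (x, k)|
          + l1 (pi k x (marg μ)) (pi k x (marg μ')) * μ' (x, k) := by
      intro k x
      rw [Finset.sum_add_distrib, ← Finset.sum_mul, (hpiProb k x _ hm).2, one_mul,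
        ← Finset.sum_mul]
      rfl
    calc ∑ k, ∑ x, ∑ u : U,
        (pi k x (marg μ) u * |μ (x, k) - μ' (x, k)|
          + |pi k x (marg μ) u - pi k x (marg μ') u| * μ' (x, k))
        = ∑ k, ∑ x, (|μ (x, k) - μ' (x, k)|
            + l1 (pi k x (marg μ)) (pi k x (marg μ')) * μ' (x, k)) :=
          Finset.sum_congr rfl fun k _ => Finset.sum_congr rfl fun x _ => peru k x
      _ ≤ ∑ k, ∑ x, (|μ (x, k) - μ' (x, k)|
            + (LQ * l1 (marg μ) (marg μ')) * μ' (x, k)) := by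
          refine Finset.sum_le_sum fun k _ => Finset.sum_le_sum fun x _ => ?_
          exact add_le_add_right
            (mul_le_mul_of_nonneg_right (hpiLip k x _ _ hm hm') (hμ'.1 _)) _
      _ = l1 μ μ' + LQ * l1 (marg μ) (marg μ') := by
          simp only [Finset.sum_add_distrib, ← Finset.mul_sum]
          rw [sum_prob_swap hμ', mul_one]
          congr 1
          rw [l1, Fintype.sum_prod_type, Finset.sum_comm]
  -- main bound
  have main : l1 (PMFmu μ) (PMFmu μ')
      ≤ l1 μ μ' + LQ * l1 (marg μ) (marg μ')
        + LP * (l1 (marg μ) (marg μ') + l1 (marg (nuMF μ)) (marg (nuMF μ'))) := by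
    have step1 : l1 (PMFmu μ) (PMFmu μ')
        ≤ ∑ k, ∑ x, ∑ u : U, ∑ x' : X,
            (|μ (x, k) - μ' (x, k)| * pi k x (marg μ) u
                * Pk k x u (marg μ) (marg (nuMF μ)) x'
              + μ' (x, k) * |pi k x (marg μ) u - pi k x (marg μ') u|
                * Pk k x u (marg μ) (marg (nuMF μ)) x'
              + μ' (x, k) * pi k x (marg μ') u
                * |Pk k x u (marg μ) (marg (nuMF μ)) x'
                    - Pk k x u (marg μ') (marg (nuMF μ')) x'|) := by
      calc l1 (PMFmu μ) (PMFmu μ')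
          = ∑ x' : X, ∑ k, |PMFmu μ (x', k) - PMFmu μ' (x', k)| := by
            rw [l1, Fintype.sum_prod_type]
        _ ≤ ∑ x' : X, ∑ k, ∑ x, ∑ u : U,
            (|μ (x, k) - μ' (x, k)| * pi k x (marg μ) u
                * Pk k x u (marg μ) (marg (nuMF μ)) x'
              + μ' (x, k) * |pi k x (marg μ) u - pi k x (marg μ') u|
                * Pk k x u (marg μ) (marg (nuMF μ)) x'
              + μ' (x, k) * pi k x (marg μ') u
                * |Pk k x u (marg μ) (marg (nuMF μ)) x'
                    - Pk k x u (marg μ') (marg (nuMF μ')) x'|) := by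
            refine Finset.sum_le_sum fun x' _ => Finset.sum_le_sum fun k _ => ?_
            rw [hPMFmu, hPMFmu, ← Finset.sum_sub_distrib]
            refine (Finset.abs_sum_le_sum_abs _ _).trans
              (Finset.sum_le_sum fun x _ => ?_)
            rw [← Finset.sum_sub_distrib]
            refine (Finset.abs_sum_le_sum_abs _ _).trans
              (Finset.sum_le_sum fun u _ => ?_)
            have hsplit : μ (x, k) * pi k x (marg μ) u
                  * Pk k x u (marg μ) (marg (nuMF μ)) x'
                - μ' (x, k) * pi k x (marg μ') u
                  * Pk k x u (marg μ') (marg (nuMF μ')) x'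
                = (μ (x, k) - μ' (x, k)) * pi k x (marg μ) u
                    * Pk k x u (marg μ) (marg (nuMF μ)) x'
                  + μ' (x, k) * (pi k x (marg μ) u - pi k x (marg μ') u)
                    * Pk k x u (marg μ) (marg (nuMF μ)) x'
                  + μ' (x, k) * pi k x (marg μ') u
                    * (Pk k x u (marg μ) (marg (nuMF μ)) x'
                        - Pk k x u (marg μ') (marg (nuMF μ')) x') := by ring
            rw [hsplit]
            refine (abs_add_three _ _ _).trans_eq ?_
            rw [abs_mul, abs_mul, abs_mul, abs_mul, abs_mul, abs_mul,
              abs_of_nonneg ((hpiProb k x _ hm).1 u),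
              abs_of_nonneg ((hPkProb k x u _ _ hm hν).1 x'),
              abs_of_nonneg (hμ'.1 (x, k)),
              abs_of_nonneg ((hpiProb k x _ hm').1 u)]
        _ = _ := sum_rot _
    refine step1.trans ?_
    have perx' : ∀ (k : Fin K) (x : X) (u : U), ∑ x' : X,
        (|μ (x, k) - μ' (x, k)| * pi k x (marg μ) u
            * Pk k x u (marg μ) (marg (nuMF μ)) x'
          + μ' (x, k) * |pi k x (marg μ) u - pi k x (marg μ') u|
            * Pk k x u (marg μ) (marg (nuMF μ)) x'
          + μ' (x, k) * pi k x (marg μ') u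
            * |Pk k x u (marg μ) (marg (nuMF μ)) x'
                - Pk k x u (marg μ') (marg (nuMF μ')) x'|)
        = |μ (x, k) - μ' (x, k)| * pi k x (marg μ) u
          + μ' (x, k) * |pi k x (marg μ) u - pi k x (marg μ') u|
          + μ' (x, k) * pi k x (marg μ') u
            * l1 (Pk k x u (marg μ) (marg (nuMF μ)))
                (Pk k x u (marg μ') (marg (nuMF μ'))) := by
      intro k x u
      rw [Finset.sum_add_distrib, Finset.sum_add_distrib,
        ← Finset.mul_sum, ← Finset.mul_sum, ← Finset.mul_sum,
        (hPkProb k x u _ _ hm hν).2, mul_one, mul_one]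
      rfl
    have step2 : ∑ k, ∑ x, ∑ u : U, ∑ x' : X,
        (|μ (x, k) - μ' (x, k)| * pi k x (marg μ) u
            * Pk k x u (marg μ) (marg (nuMF μ)) x'
          + μ' (x, k) * |pi k x (marg μ) u - pi k x (marg μ') u|
            * Pk k x u (marg μ) (marg (nuMF μ)) x'
          + μ' (x, k) * pi k x (marg μ') u
            * |Pk k x u (marg μ) (marg (nuMF μ)) x'
                - Pk k x u (marg μ') (marg (nuMF μ')) x'|)
        ≤ ∑ k, ∑ x, ∑ u : U,
        (|μ (x, k) - μ' (x, k)| * pi k x (marg μ) u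
          + μ' (x, k) * |pi k x (marg μ) u - pi k x (marg μ') u|
          + μ' (x, k) * pi k x (marg μ') u
            * (LP * (l1 (marg μ) (marg μ')
                + l1 (marg (nuMF μ)) (marg (nuMF μ'))))) := by
      refine Finset.sum_le_sum fun k _ => Finset.sum_le_sum fun x _ =>
        Finset.sum_le_sum fun u _ => ?_
      rw [perx' k x u]
      refine add_le_add_right ?_ _
      exact mul_le_mul_of_nonneg_left (hPkLip k x u _ _ _ _ hm hν hm' hν')
        (mul_nonneg (hμ'.1 _) ((hpiProb k x _ hm').1 u))
    refine step2.trans ?_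
    have peru : ∀ (k : Fin K) (x : X), ∑ u : U,
        (|μ (x, k) - μ' (x, k)| * pi k x (marg μ) u
          + μ' (x, k) * |pi k x (marg μ) u - pi k x (marg μ') u|
          + μ' (x, k) * pi k x (marg μ') u
            * (LP * (l1 (marg μ) (marg μ')
                + l1 (marg (nuMF μ)) (marg (nuMF μ')))))
        = |μ (x, k) - μ' (x, k)|
          + μ' (x, k) * l1 (pi k x (marg μ)) (pi k x (marg μ'))
          + μ' (x, k) * (LP * (l1 (marg μ) (marg μ')
              + l1 (marg (nuMF μ)) (marg (nuMF μ')))) := by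
      intro k x
      rw [Finset.sum_add_distrib, Finset.sum_add_distrib, ← Finset.mul_sum,
        (hpiProb k x _ hm).2, mul_one, ← Finset.mul_sum, ← Finset.sum_mul,
        ← Finset.mul_sum, (hpiProb k x _ hm').2, mul_one]
      rfl
    calc ∑ k, ∑ x, ∑ u : U,
        (|μ (x, k) - μ' (x, k)| * pi k x (marg μ) u
          + μ' (x, k) * |pi k x (marg μ) u - pi k x (marg μ') u|
          + μ' (x, k) * pi k x (marg μ') u
            * (LP * (l1 (marg μ) (marg μ')
                + l1 (marg (nuMF μ)) (marg (nuMF μ')))))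
        = ∑ k, ∑ x,
          (|μ (x, k) - μ' (x, k)|
            + μ' (x, k) * l1 (pi k x (marg μ)) (pi k x (marg μ'))
            + μ' (x, k) * (LP * (l1 (marg μ) (marg μ')
                + l1 (marg (nuMF μ)) (marg (nuMF μ'))))) :=
          Finset.sum_congr rfl fun k _ => Finset.sum_congr rfl fun x _ => peru k x
      _ ≤ ∑ k, ∑ x,
          (|μ (x, k) - μ' (x, k)|
            + μ' (x, k) * (LQ * l1 (marg μ) (marg μ'))
            + μ' (x, k) * (LP * (l1 (marg μ) (marg μ')
                + l1 (marg (nuMF μ)) (marg (nuMF μ'))))) := by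
          refine Finset.sum_le_sum fun k _ => Finset.sum_le_sum fun x _ => ?_
          refine add_le_add_left (add_le_add_right ?_ _) _
          exact mul_le_mul_of_nonneg_left (hpiLip k x _ _ hm hm') (hμ'.1 _)
      _ = l1 μ μ' + LQ * l1 (marg μ) (marg μ')
          + LP * (l1 (marg μ) (marg μ')
              + l1 (marg (nuMF μ)) (marg (nuMF μ'))) := by
          simp only [Finset.sum_add_distrib, ← Finset.mul_sum, ← Finset.sum_mul]
          rw [sum_prob_swap hμ', one_mul, one_mul]
          congr 1
          congr 1
          rw [l1, Fintype.sum_prod_type, Finset.sum_comm]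
  refine ⟨l1_marg_le _ _, ?_⟩
  have hfin : LP * (l1 (marg (nuMF μ)) (marg (nuMF μ')))
      ≤ LP * (l1 μ μ' + LQ * l1 (marg μ) (marg μ')) :=
    mul_le_mul_of_nonneg_left hl1ν hLP
  nlinarith [main, hfin]
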